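/- Let G = {1, σ} be the cyclic group of order 2 acting on a finitely generated free abelian group Λ. Then there exist nonnegative integers r0, r+, r− and an isomorphism of G-modules Λ ≅ ℤ[G]^{r0} ⊕ ℤ_+^{r+} ⊕ ℤ_−^{r−}; in particular rk(Λ) = 2·r0 + r+ + r−. -/

import Mathlib

/-- The "twist" involution on coordinates: `w`-coordinates get negated plus a contribution
`a i` times the `z i` coordinate at position `f i`; `y` and `z` coordinates are fixed. -/
def twistFun {m k n : ℕ} (f : Fin n ↪ Fin m) (a : Fin n → ℤ)
    (x : Fin m ⊕ (Fin k ⊕ Fin n) → ℤ) : Fin m ⊕ (Fin k ⊕ Fin n) → ℤ :=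
  Sum.elim (fun j => -x (.inl j) + ∑ i, if f i = j then a i * x (.inr (.inr i)) else 0)
    (Sum.elim (fun c => x (.inr (.inl c))) (fun i => x (.inr (.inr i))))

lemma twistFun_add {m k n : ℕ} (f : Fin n ↪ Fin m) (a : Fin n → ℤ)
    (x y : Fin m ⊕ (Fin k ⊕ Fin n) → ℤ) :
    twistFun f a (x + y) = twistFun f a x + twistFun f a y := by
  funext j
  rcases j with j | c | i <;>
    simp only [twistFun, Sum.elim_inl, Sum.elim_inr, Pi.add_apply]
  · have : ∀ i : Fin n, (if f i = j then a i * (x (.inr (.inr i)) + y (.inr (.inr i))) else 0)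
        = (if f i = j then a i * x (.inr (.inr i)) else 0)
          + (if f i = j then a i * y (.inr (.inr i)) else 0) := by
      intro i; split_ifs <;> ring
    rw [Finset.sum_congr rfl fun i _ => this i, Finset.sum_add_distrib]
    ring

lemma twist_sum_collapse {m n : ℕ} (f : Fin n ↪ Fin m) (a : Fin n → ℤ) (z : Fin n → ℤ)
    (i : Fin n) : (∑ i', if f i' = f i then a i' * z i' else 0) = a i * z i := by
  rw [Finset.sum_eq_single i (fun i' _ hne => if_neg (fun e => hne (f.injective e)))
    (by simp), if_pos rfl]

lemma twist_sum_zero {m n : ℕ} (f : Fin n ↪ Fin m) (a : Fin n → ℤ) (z : Fin n → ℤ)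
    {j : Fin m} (hj : j ∉ Set.range f) : (∑ i', if f i' = j then a i' * z i' else 0) = 0 := by
  refine Finset.sum_eq_zero fun i' _ => if_neg fun e => hj ⟨i', e⟩

/-- The 0/1 case of the classification, done by explicit regrouping of coordinates. -/
lemma auxA₀ (m k n : ℕ) (f : Fin n ↪ Fin m) (a : Fin n → ℤ)
    (ha : ∀ i, a i = 0 ∨ a i = 1) :
    ∃ (r0 rp rm : ℕ)
      (E : ((Fin m ⊕ (Fin k ⊕ Fin n)) → ℤ) ≃+ (Fin r0 → ℤ × ℤ) × (Fin rp → ℤ) × (Fin rm → ℤ)),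
      (∀ x, E (twistFun f a x)
          = ((fun i => ((E x).1 i).swap), (E x).2.1, -(E x).2.2)) ∧
      m + k + n = 2 * r0 + rp + rm := by
  classical
  -- index types
  let P1 := {i : Fin n // a i = 1}
  let P0 := {i : Fin n // ¬ a i = 1}
  let C := {j : Fin m // j ∉ Set.range ⇑f}
  let M₂ := (P1 → ℤ × ℤ) × ((Fin k ⊕ P0) → ℤ) × ((C ⊕ P0) → ℤ)
  -- the regrouping map
  let toF : ((Fin m ⊕ (Fin k ⊕ Fin n)) → ℤ) → M₂ := fun x =>
    (fun i => (x (.inl (f i.1)), x (.inr (.inr i.1)) - x (.inl (f i.1))),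
     Sum.elim (fun c => x (.inr (.inl c))) (fun i => x (.inr (.inr i.1))),
     Sum.elim (fun j => x (.inl j.1)) (fun i => x (.inl (f i.1))))
  let invF : M₂ → ((Fin m ⊕ (Fin k ⊕ Fin n)) → ℤ) := fun v =>
    Sum.elim
      (fun j => if h : ∃ i, f i = j then
          (if h1 : a h.choose = 1 then (v.1 ⟨h.choose, h1⟩).1
            else v.2.2 (.inr ⟨h.choose, h1⟩))
        else v.2.2 (.inl ⟨j, fun hr => h (Set.mem_range.mp hr)⟩))
      (Sum.elim (fun c => v.2.1 (.inl c))
        (fun i => if h1 : a i = 1 then (v.1 ⟨i, h1⟩).1 + (v.1 ⟨i, h1⟩).2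
          else v.2.1 (.inr ⟨i, h1⟩)))
  have hleft : ∀ x, invF (toF x) = x := by
    intro x
    funext j
    rcases j with j | c | i
    · simp only [invF, Sum.elim_inl]
      by_cases h : ∃ i, f i = j
      · rw [dif_pos h]
        have hc := h.choose_spec
        by_cases h1 : a h.choose = 1
        · rw [dif_pos h1]
          show x (.inl (f h.choose)) = x (.inl j)
          rw [hc]
        · rw [dif_neg h1]
          show x (.inl (f h.choose)) = x (.inl j)
          rw [hc]
      · rw [dif_neg h]
        rfl
    · rfl
    · simp only [invF, Sum.elim_inr]
      by_cases h1 : a i = 1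
      · rw [dif_pos h1]
        show x (.inl (f i)) + (x (.inr (.inr i)) - x (.inl (f i))) = x (.inr (.inr i))
        ring
      · rw [dif_neg h1]
        rfl
  have hright : ∀ v, toF (invF v) = v := by
    intro v
    refine Prod.ext (funext fun i => ?_) (Prod.ext (funext fun o => ?_) (funext fun o => ?_))
    · -- first component, i : P1
      obtain ⟨i, hi⟩ := i
      have h : ∃ i', f i' = f i := ⟨i, rfl⟩
      have hc : h.choose = i := f.injective h.choose_spec
      show (invF v (.inl (f i)), invF v (.inr (.inr i)) - invF v (.inl (f i))) = v.1 ⟨i, hi⟩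
      have e1 : invF v (.inl (f i)) = (v.1 ⟨i, hi⟩).1 := by
        simp only [invF, Sum.elim_inl]
        rw [dif_pos h, hc, dif_pos hi]
      have e2 : invF v (.inr (.inr i)) = (v.1 ⟨i, hi⟩).1 + (v.1 ⟨i, hi⟩).2 := by
        simp only [invF, Sum.elim_inr, Sum.elim_inr]
        rw [dif_pos hi]
      rw [e1, e2]
      exact Prod.ext rfl (by ring)
    · rcases o with c | i
      · rfl
      · obtain ⟨i, hi⟩ := i
        show invF v (.inr (.inr i)) = v.2.1 (.inr ⟨i, hi⟩)
        simp only [invF, Sum.elim_inr]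
        rw [dif_neg hi]
    · rcases o with j | i
      · obtain ⟨j, hj⟩ := j
        show invF v (.inl j) = v.2.2 (.inl ⟨j, hj⟩)
        simp only [invF, Sum.elim_inl]
        rw [dif_neg (fun h : ∃ i', f i' = j => hj ⟨h.choose, h.choose_spec⟩)]
      · obtain ⟨i, hi⟩ := i
        have h : ∃ i', f i' = f i := ⟨i, rfl⟩
        have hc : h.choose = i := f.injective h.choose_spec
        show invF v (.inl (f i)) = v.2.2 (.inr ⟨i, hi⟩)
        simp only [invF, Sum.elim_inl]
        rw [dif_pos h, hc, dif_neg hi]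
  let eβ : ((Fin m ⊕ (Fin k ⊕ Fin n)) → ℤ) ≃+ M₂ :=
    AddEquiv.mk' ⟨toF, invF, hleft, hright⟩ (by
      intro x y
      refine Prod.ext (funext fun i => ?_) (Prod.ext (funext fun o => ?_) (funext fun o => ?_))
      · exact Prod.ext rfl (by show (x + y) (.inr (.inr i.1)) - (x + y) (.inl (f i.1)) = (x _ - x _) + (y _ - y _); simp only [Pi.add_apply]; ring)
      · rcases o with c | i <;> rfl
      · rcases o with j | i <;> rfl)
  have hβ : ∀ x, eβ (twistFun f a x)
      = ((fun i => ((eβ x).1 i).swap), (eβ x).2.1, -(eβ x).2.2) := by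
    intro x
    show toF (twistFun f a x)
      = ((fun i => ((toF x).1 i).swap), (toF x).2.1, -((toF x).2.2))
    refine Prod.ext (funext fun i => ?_) (Prod.ext (funext fun o => ?_) (funext fun o => ?_))
    · obtain ⟨i, hi⟩ := i
      show (twistFun f a x (.inl (f i)), twistFun f a x (.inr (.inr i))
            - twistFun f a x (.inl (f i)))
          = ((toF x).1 ⟨i, hi⟩).swap
      have e1 : twistFun f a x (.inl (f i)) = -x (.inl (f i)) + a i * x (.inr (.inr i)) := by
        simp only [twistFun, Sum.elim_inl]
        rw [twist_sum_collapse]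
      have e2 : twistFun f a x (.inr (.inr i)) = x (.inr (.inr i)) := rfl
      rw [e1, e2, hi]
      exact Prod.ext (by show _ = x _ - x _; ring) (by show _ = x (.inl (f i)); ring)
    · rcases o with c | i <;> rfl
    · rcases o with j | i
      · obtain ⟨j, hj⟩ := j
        show twistFun f a x (.inl j) = -((toF x).2.2 (.inl ⟨j, hj⟩))
        simp only [twistFun, Sum.elim_inl]
        rw [twist_sum_zero f a _ hj]
        show -x (.inl j) + 0 = -x (.inl j)
        ring
      · obtain ⟨i, hi⟩ := i
        have ha0 : a i = 0 := (ha i).resolve_right hi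
        show twistFun f a x (.inl (f i)) = -((toF x).2.2 (.inr ⟨i, hi⟩))
        simp only [twistFun, Sum.elim_inl]
        rw [twist_sum_collapse, ha0]
        show -x (.inl (f i)) + 0 * x (.inr (.inr i)) = -x (.inl (f i))
        ring
  -- reindexing to `Fin`s
  refine ⟨Fintype.card P1, k + Fintype.card P0, Fintype.card C + Fintype.card P0, ?_⟩
  let q1 : Fin (Fintype.card P1) ≃ P1 := (Fintype.equivFin P1).symm
  let q2 : Fin (k + Fintype.card P0) ≃ (Fin k ⊕ P0) :=
    finSumFinEquiv.symm.trans (Equiv.sumCongr (Equiv.refl _) (Fintype.equivFin P0).symm)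
  let q3 : Fin (Fintype.card C + Fintype.card P0) ≃ (C ⊕ P0) :=
    finSumFinEquiv.symm.trans
      (Equiv.sumCongr (Fintype.equivFin C).symm (Fintype.equivFin P0).symm)
  let eγ : M₂ ≃+ (Fin (Fintype.card P1) → ℤ × ℤ) × (Fin (k + Fintype.card P0) → ℤ)
      × (Fin (Fintype.card C + Fintype.card P0) → ℤ) :=
    AddEquiv.mk' (Equiv.prodCongr (Equiv.arrowCongr q1.symm (Equiv.refl _))
      (Equiv.prodCongr (Equiv.arrowCongr q2.symm (Equiv.refl _))
        (Equiv.arrowCongr q3.symm (Equiv.refl _)))) (by intro x y; rfl)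
  have hγ : ∀ v : M₂, eγ ((fun i => (v.1 i).swap), v.2.1, -v.2.2)
      = ((fun i => ((eγ v).1 i).swap), (eγ v).2.1, -(eγ v).2.2) := by
    intro v; rfl
  refine ⟨eβ.trans eγ, fun x => ?_, ?_⟩
  · show eγ (eβ (twistFun f a x)) = _
    rw [hβ, hγ]
    rfl
  · have h1 := Fintype.card_congr (Equiv.sumCompl (fun i : Fin n => a i = 1))
    have h2 := Fintype.card_congr (Equiv.sumCompl (fun j : Fin m => j ∈ Set.range ⇑f))
    have h3 := Fintype.card_congr (Equiv.ofInjective ⇑f f.injective)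
    simp only [Fintype.card_sum, Fintype.card_fin] at h1 h2 h3
    have h4 : Fintype.card {j : Fin m // j ∈ Set.range ⇑f} = Fintype.card ↥(Set.range ⇑f) :=
      Fintype.card_congr (Equiv.refl _)
    have b1 : Fintype.card P1 = Fintype.card {i : Fin n // a i = 1} :=
      Fintype.card_congr (Equiv.refl _)
    have b2 : Fintype.card P0 = Fintype.card {i : Fin n // ¬ a i = 1} :=
      Fintype.card_congr (Equiv.refl _)
    have b3 : Fintype.card C = Fintype.card {j : Fin m // ¬ j ∈ Set.range ⇑f} :=
      Fintype.card_congr (Equiv.refl _)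
    omega

/-- General diagonal values: reduce to the 0/1 case with a shear change of coordinates. -/
lemma auxA (m k n : ℕ) (f : Fin n ↪ Fin m) (a : Fin n → ℤ) :
    ∃ (r0 rp rm : ℕ)
      (E : ((Fin m ⊕ (Fin k ⊕ Fin n)) → ℤ) ≃+ (Fin r0 → ℤ × ℤ) × (Fin rp → ℤ) × (Fin rm → ℤ)),
      (∀ x, E (twistFun f a x)
          = ((fun i => ((E x).1 i).swap), (E x).2.1, -(E x).2.2)) ∧
      m + k + n = 2 * r0 + rp + rm := by
  classical
  let ε : Fin n → ℤ := fun i => a i % 2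
  have hε : ∀ i, ε i = 0 ∨ ε i = 1 := fun i => Int.emod_two_eq_zero_or_one (a i)
  let c : Fin n → ℤ := fun i => -(a i / 2)
  have hc : ∀ i, a i + 2 * c i = ε i := by
    intro i
    show a i + 2 * -(a i / 2) = a i % 2
    rw [Int.emod_def]
    ring
  obtain ⟨r0, rp, rm, E, hE, hcard⟩ := auxA₀ m k n f ε hε
  have key : ∀ (b d : Fin n → ℤ) (z : Fin n → ℤ) (j : Fin m),
      ((∑ i, if f i = j then b i * z i else 0) + ∑ i, if f i = j then d i * z i else 0)
        = ∑ i, if f i = j then (b i + d i) * z i else 0 := by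
    intro b d z j
    rw [← Finset.sum_add_distrib]
    exact Finset.sum_congr rfl fun i _ => by split_ifs <;> ring
  let shF : ∀ (d : Fin n → ℤ) (_ : (Fin m ⊕ (Fin k ⊕ Fin n)) → ℤ),
      (Fin m ⊕ (Fin k ⊕ Fin n)) → ℤ := fun d x =>
    Sum.elim (fun j => x (.inl j) + ∑ i, if f i = j then d i * x (.inr (.inr i)) else 0)
      (fun o => x (.inr o))
  have hinv : ∀ (d x), shF (-d) (shF d x) = x := by
    intro d x
    funext j
    rcases j with j | o
    · show (x (.inl j) + ∑ i, if f i = j then d i * x (.inr (.inr i)) else 0)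
          + (∑ i, if f i = j then (-d) i * x (.inr (.inr i)) else 0) = x (.inl j)
      rw [add_assoc, key]
      have : ∀ i : Fin n, (if f i = j then (d i + (-d) i) * x (.inr (.inr i)) else 0) = 0 := by
        intro i; split_ifs <;> simp
      rw [Finset.sum_congr rfl fun i _ => this i, Finset.sum_const_zero, add_zero]
    · rfl
  let sh : ((Fin m ⊕ (Fin k ⊕ Fin n)) → ℤ) ≃+ ((Fin m ⊕ (Fin k ⊕ Fin n)) → ℤ) :=
    AddEquiv.mk' ⟨shF c, shF (-c), hinv c, by
        intro x
        have := hinv (-c) x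
        rwa [neg_neg] at this⟩ (by
      intro x y
      funext j
      rcases j with j | o
      · show (x (.inl j) + y (.inl j)) + (∑ i, if f i = j
              then c i * (x (.inr (.inr i)) + y (.inr (.inr i))) else 0) = _
        have : ∀ i : Fin n, (if f i = j then c i * (x (.inr (.inr i)) + y (.inr (.inr i))) else 0)
            = (if f i = j then c i * x (.inr (.inr i)) else 0)
              + (if f i = j then c i * y (.inr (.inr i)) else 0) := by
          intro i; split_ifs <;> ring
        rw [Finset.sum_congr rfl fun i _ => this i, Finset.sum_add_distrib]
        show _ = (x (.inl j) + _) + (y (.inl j) + _)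
        ring
      · rfl)
  have hsh : ∀ x, sh (twistFun f a x) = twistFun f ε (sh x) := by
    intro x
    funext j
    rcases j with j | o
    · show twistFun f a x (.inl j)
          + (∑ i, if f i = j then c i * twistFun f a x (.inr (.inr i)) else 0)
        = -(sh x) (.inl j) + ∑ i, if f i = j then ε i * (sh x) (.inr (.inr i)) else 0
    
      have hz : ∀ i, twistFun f a x (.inr (.inr i)) = x (.inr (.inr i)) := fun i => rfl
      have hz' : ∀ i : Fin n, (sh x) (.inr (.inr i)) = x (.inr (.inr i)) := fun i => rfl
      simp only [hz, hz']
      show (-x (.inl j) + ∑ i, if f i = j then a i * x (.inr (.inr i)) else 0) + _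
        = -(x (.inl j) + ∑ i, if f i = j then c i * x (.inr (.inr i)) else 0) + _
      rw [add_assoc, key]
      have h2 : ((∑ i, if f i = j then c i * x (.inr (.inr i)) else 0)
          + ∑ i, if f i = j then (a i + c i) * x (.inr (.inr i)) else 0)
          = ∑ i, if f i = j then ε i * x (.inr (.inr i)) else 0 := by
        rw [key]
        refine Finset.sum_congr rfl fun i _ => ?_
        split_ifs
        · linear_combination x (.inr (.inr i)) * hc i
        · rfl
      linarith [h2]
    · rcases o with cc | i <;> rfl
  exact ⟨r0, rp, rm, sh.trans E, fun x => by
    show E (sh (twistFun f a x)) = _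
    rw [hsh, hE]
    rfl, hcard⟩

/-- Delta functions. -/
def deltaFun {J : Type*} [DecidableEq J] (j : J) : J → ℤ := fun j' => if j = j' then 1 else 0

lemma twistFun_delta₁ {m k n : ℕ} (f : Fin n ↪ Fin m) (a : Fin n → ℤ) (j : Fin m) :
    twistFun f a (deltaFun (.inl j)) = -deltaFun (Sum.inl j : Fin m ⊕ (Fin k ⊕ Fin n)) := by
  funext j'
  rcases j' with j' | c' | i' <;>
    simp [twistFun, deltaFun]

lemma twistFun_delta₂ {m k n : ℕ} (f : Fin n ↪ Fin m) (a : Fin n → ℤ) (c : Fin k) :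
    twistFun f a (deltaFun (.inr (.inl c)))
      = deltaFun (Sum.inr (Sum.inl c) : Fin m ⊕ (Fin k ⊕ Fin n)) := by
  funext j'
  rcases j' with j' | c' | i' <;>
    simp [twistFun, deltaFun]

lemma twistFun_delta₃ {m k n : ℕ} (f : Fin n ↪ Fin m) (a : Fin n → ℤ) (i : Fin n) :
    twistFun f a (deltaFun (.inr (.inr i)))
      = deltaFun (Sum.inr (Sum.inr i) : Fin m ⊕ (Fin k ⊕ Fin n))
        + a i • deltaFun (Sum.inl (f i) : Fin m ⊕ (Fin k ⊕ Fin n)) := by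
  funext j'
  rcases j' with j' | c' | i'
  · show _ + (∑ i', if f i' = j' then a i' * deltaFun
        (Sum.inr (Sum.inr i) : Fin m ⊕ (Fin k ⊕ Fin n)) (.inr (.inr i')) else 0) = _
    rw [Finset.sum_eq_single i (fun i' _ hne => ?_) (by simp)]
    · by_cases hf : f i = j' <;>
        simp [deltaFun, hf]
    · have h0 : deltaFun (Sum.inr (Sum.inr i) : Fin m ⊕ (Fin k ⊕ Fin n)) (.inr (.inr i')) = 0 := by
        simp [deltaFun, hne.symm]
      rw [h0, mul_zero, ite_self]
  · simp [twistFun, deltaFun]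
  · simp [twistFun, deltaFun]

set_option maxHeartbeats 1000000 in
/-- Let `G = {1, σ}` be the cyclic group of order 2 acting on a finitely
generated free abelian group `Λ`. Then there are nonnegative integers `r0, r+, r−` and an
isomorphism of `G`-modules `Λ ≅ ℤ[G]^{r0} ⊕ ℤ₊^{r+} ⊕ ℤ₋^{r−}`, where `ℤ[G]` is modelled
by `ℤ × ℤ` with `σ` swapping the coordinates, `ℤ₊` is `ℤ` with the trivial action and
`ℤ₋` is `ℤ` with `σ` acting by `-1`. In particular `rk Λ = 2·r0 + r+ + r−`. -/
theorem exists_decomposition_of_involution_on_free_abelian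
    {Λ : Type*} [AddCommGroup Λ] [Module.Free ℤ Λ] [Module.Finite ℤ Λ]
    (σ : AddMonoid.End Λ) (hσ : σ * σ = 1) :
    ∃ (r0 rp rm : ℕ)
      (e : Λ ≃+ (Fin r0 → ℤ × ℤ) × (Fin rp → ℤ) × (Fin rm → ℤ)),
      (∀ x : Λ, e (σ x) = ((fun i => ((e x).1 i).swap), (e x).2.1, -(e x).2.2)) ∧
      Module.finrank ℤ Λ = 2 * r0 + rp + rm := by
  classical
  let S : Λ →ₗ[ℤ] Λ := (σ : Λ →+ Λ).toIntLinearMap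
  have hS : ∀ x, S (S x) = x := by
    intro x
    have := DFunLike.congr_fun hσ x
    simp at this
    exact this
  let N : Submodule ℤ Λ := LinearMap.ker (S + LinearMap.id)
  have hN : ∀ v : Λ, v ∈ N → S v = -v := by
    intro v hv
    have h : S v + v = 0 := hv
    exact eq_neg_of_add_eq_zero_left h
  let bL := Module.finBasis ℤ Λ
  let Q := Λ ⧸ N
  let π : Λ →ₗ[ℤ] Q := N.mkQ
  -- a basis for `Q`, which is free since it embeds in `Λ` via `S + 1`
  let eQ : Q ≃ₗ[ℤ] LinearMap.range (S + LinearMap.id) :=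
    LinearMap.quotKerEquivRange (S + LinearMap.id)
  obtain ⟨nq, bR⟩ := Submodule.basisOfPid bL (LinearMap.range (S + LinearMap.id))
  let bQ : Module.Basis (Fin nq) ℤ Q := bR.map eQ.symm
  -- a section of the projection `π`
  let s : Q →ₗ[ℤ] Λ := bQ.constr ℤ fun i => (N.mkQ_surjective (bQ i)).choose
  have hs : ∀ q, π (s q) = q := by
    have h : π ∘ₗ s = LinearMap.id := by
      refine bQ.ext fun i => ?_
      show π (s (bQ i)) = bQ i
      have h1 : s (bQ i) = (N.mkQ_surjective (bQ i)).choose := by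
        simp [s, Module.Basis.constr_basis]
      rw [h1]
      exact (N.mkQ_surjective (bQ i)).choose_spec
    exact fun q => DFunLike.congr_fun h q
  -- the obstruction map `F : Q → N`
  have hFmem : ∀ q : Q, S (s q) - s q ∈ N := by
    intro q
    show S (S (s q) - s q) + (S (s q) - s q) = 0
    rw [map_sub, hS]
    abel
  let F : Q →ₗ[ℤ] N := LinearMap.codRestrict N ((S ∘ₗ s) - s) hFmem
  have hFs : ∀ q, S (s q) = s q + (F q : Λ) := by
    intro q
    have : (F q : Λ) = S (s q) - s q := rfl
    rw [this]
    abel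
  -- Smith normal form for the range of `F` inside `N`
  obtain ⟨mN, bN0⟩ := Submodule.basisOfPid bL N
  obtain ⟨nn, snf⟩ := Submodule.smithNormalForm bN0 (LinearMap.range F)
  obtain ⟨kk, bK⟩ := Submodule.basisOfPid bQ (LinearMap.ker F)
  -- a section `t` of `F` over its range
  have hsurF : ∀ w : LinearMap.range F, ∃ q : Q, F q = (w : N) := fun w => w.2
  let t : (LinearMap.range F) →ₗ[ℤ] Q := snf.bN.constr ℤ fun i => (hsurF (snf.bN i)).choose
  have ht : ∀ w, F (t w) = (w : N) := by
    have h : F ∘ₗ t = (LinearMap.range F).subtype := by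
      refine snf.bN.ext fun i => ?_
      show F (t (snf.bN i)) = (snf.bN i : N)
      have h1 : t (snf.bN i) = (hsurF (snf.bN i)).choose := by
        simp [t, Module.Basis.constr_basis]
      rw [h1]
      exact (hsurF (snf.bN i)).choose_spec
    exact fun w => DFunLike.congr_fun h w
  -- the splitting `Λ ≃ N × (ker F × range F)`
  let F' : Q →ₗ[ℤ] LinearMap.range F := F.rangeRestrict
  have hF' : ∀ q, (F' q : N) = F q := fun q => rfl
  have hmem1 : ∀ x : Λ, x - s (π x) ∈ N := by
    intro x
    have h0 : π (x - s (π x)) = 0 := by rw [map_sub, hs, sub_self]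
    exact (Submodule.Quotient.mk_eq_zero N).mp h0
  have hmem2 : ∀ q : Q, q - t (F' q) ∈ LinearMap.ker F := by
    intro q
    rw [LinearMap.mem_ker, map_sub, ht, hF', sub_self]
  let c1 : Λ →ₗ[ℤ] N := LinearMap.codRestrict N (LinearMap.id - s ∘ₗ π) hmem1
  let idQ : Q →ₗ[ℤ] Q := LinearMap.id
  let c2 : Q →ₗ[ℤ] LinearMap.ker F :=
    LinearMap.codRestrict (LinearMap.ker F) (idQ - t ∘ₗ F') hmem2
  let fwd : Λ →ₗ[ℤ] N × (LinearMap.ker F × LinearMap.range F) :=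
    LinearMap.prod c1 ((LinearMap.prod c2 F') ∘ₗ π)
  let bwd : (N × (LinearMap.ker F × LinearMap.range F)) →ₗ[ℤ] Λ :=
    N.subtype ∘ₗ LinearMap.fst ℤ _ _
      + s ∘ₗ ((LinearMap.ker F).subtype ∘ₗ LinearMap.fst ℤ _ _
          + t ∘ₗ LinearMap.snd ℤ _ _) ∘ₗ LinearMap.snd ℤ _ _
  have hbwd : ∀ v : N × (LinearMap.ker F × LinearMap.range F),
      bwd v = (v.1 : Λ) + s ((v.2.1 : Q) + t v.2.2) := fun v => rfl
  have hc1 : ∀ x : Λ, (c1 x : Λ) = x - s (π x) := fun x => rfl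
  have hc2 : ∀ q : Q, (c2 q : Q) = q - t (F' q) := fun q => rfl
  have hbf : bwd ∘ₗ fwd = LinearMap.id := by
    refine LinearMap.ext fun x => ?_
    show bwd (c1 x, c2 (π x), F' (π x)) = x
    rw [hbwd, hc1, hc2]
    simp only [map_add, map_sub]
    abel
  have hfb : fwd ∘ₗ bwd = LinearMap.id := by
    refine LinearMap.ext fun v => ?_
    have hπv : π (bwd v) = (v.2.1 : Q) + t v.2.2 := by
      rw [hbwd, map_add]
      have h1 : π (v.1 : Λ) = 0 := (Submodule.Quotient.mk_eq_zero N).mpr v.1.2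
      rw [h1, hs, zero_add]
    have hFv : F' (π (bwd v)) = v.2.2 := by
      apply Subtype.ext
      rw [hπv, hF', map_add]
      have h1 : F (v.2.1 : Q) = 0 := v.2.1.2
      rw [h1, ht, zero_add]
    show (c1 (bwd v), c2 (π (bwd v)), F' (π (bwd v))) = v
    refine Prod.ext ?_ (Prod.ext ?_ ?_)
    · apply Subtype.ext
      show (c1 (bwd v) : Λ) = (v.1 : Λ)
      rw [hc1, hπv, hbwd]
      abel
    · apply Subtype.ext
      show (c2 (π (bwd v)) : Q) = (v.2.1 : Q)
      rw [hc2, hFv, hπv]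
      abel
    · exact hFv
  let e12 : Λ ≃ₗ[ℤ] N × (LinearMap.ker F × LinearMap.range F) :=
    LinearEquiv.ofLinear fwd bwd hfb hbf
  -- the adapted basis of `Λ`
  let B : Module.Basis (Fin mN ⊕ (Fin kk ⊕ Fin nn)) ℤ Λ := (snf.bM.prod (bK.prod snf.bN)).map e12.symm
  have hB : ∀ j, B j = bwd ((snf.bM.prod (bK.prod snf.bN)) j) := by
    intro j
    show ((snf.bM.prod (bK.prod snf.bN)).map e12.symm) j = _
    rw [Module.Basis.map_apply, LinearEquiv.ofLinear_symm_apply]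
  have hB1 : ∀ j, B (.inl j) = (snf.bM j : Λ) := by
    intro j
    rw [hB, Module.Basis.prod_apply]
    simp [hbwd]
  have hB2 : ∀ c, B (.inr (.inl c)) = s ((bK c : Q)) := by
    intro c
    rw [hB, Module.Basis.prod_apply]
    simp [hbwd, Module.Basis.prod_apply]
  have hB3 : ∀ i, B (.inr (.inr i)) = s (t (snf.bN i)) := by
    intro i
    rw [hB, Module.Basis.prod_apply]
    simp [hbwd, Module.Basis.prod_apply]
  -- the action of `σ` on the adapted basis
  have hσ1 : ∀ j, S (B (.inl j)) = -B (.inl j) := by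
    intro j
    rw [hB1]
    exact hN _ (snf.bM j).2
  have hσ2 : ∀ c, S (B (.inr (.inl c))) = B (.inr (.inl c)) := by
    intro c
    rw [hB2, hFs]
    have h1 : F ((bK c : Q)) = 0 := (bK c).2
    rw [h1]
    simp
  have hσ3 : ∀ i, S (B (.inr (.inr i))) = B (.inr (.inr i)) + snf.a i • B (.inl (snf.f i)) := by
    intro i
    rw [hB3, hFs, ht, hB1]
    congr 1
    have := snf.snf i
    rw [this]
    simp
  -- coordinates
  let E0 := B.equivFun
  let T : ((Fin mN ⊕ (Fin kk ⊕ Fin nn)) → ℤ) →ₗ[ℤ] ((Fin mN ⊕ (Fin kk ⊕ Fin nn)) → ℤ) :=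
    (AddMonoidHom.mk' (twistFun snf.f snf.a) (twistFun_add snf.f snf.a)).toIntLinearMap
  have hT : ∀ x, T x = twistFun snf.f snf.a x := fun x => rfl
  have hδ : ∀ j, E0 (B j) = deltaFun j := by
    intro j
    funext j'
    exact B.equivFun_self j j'
  have htw : ∀ x : Λ, E0 (S x) = twistFun snf.f snf.a (E0 x) := by
    have h : E0.toLinearMap ∘ₗ S = T ∘ₗ E0.toLinearMap := by
      refine B.ext fun j => ?_
      show E0 (S (B j)) = T (E0 (B j))
      rcases j with j | c | i
      · rw [hσ1, map_neg, hδ, hT, twistFun_delta₁]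
      · rw [hσ2, hδ, hT, twistFun_delta₂]
      · rw [hσ3, map_add, map_smul, hδ, hδ, hT, twistFun_delta₃]
    intro x
    exact DFunLike.congr_fun h x
  -- conclude with the combinatorial classification
  obtain ⟨r0, rp, rm, E, hE, hcard⟩ := auxA mN kk nn snf.f snf.a
  refine ⟨r0, rp, rm, E0.toAddEquiv.trans E, fun x => ?_, ?_⟩
  · show E (E0 (σ x)) = _
    have hσx : σ x = S x := rfl
    rw [hσx, htw, hE]
    rfl
  · have h1 : Module.finrank ℤ Λ = Fintype.card (Fin mN ⊕ (Fin kk ⊕ Fin nn)) :=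
      Module.finrank_eq_card_basis B
    simp only [Fintype.card_sum, Fintype.card_fin] at h1
    omega
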